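/- Let d ≥ 2, let 0 ≤ m ≤ d, let a be an integer, and let n = ∏_{i=1}^k p_i^{e_i} be the factorization of an integer n ≥ 2 into powers of distinct primes, with gcd(a,n) = 1. Then #S̄_d(m;a;n) = ∏_{i=1}^k #S̄_d(m;a;p_i^{e_i}). -/

import Mathlib

/-- The `d`-dimensional modular hyperbola `H_d(a;n)`:
tuples `(x_1,…,x_d)` of integers with `x_1⋯x_d ≡ a (mod n)` and `1 ≤ x_i < n`. -/
def modularHyperbola (d : ℕ) (a : ℤ) (n : ℕ) : Set (Fin d → ℤ) :=
  {x | (∏ i, x i) ≡ a [ZMOD (n : ℤ)] ∧ ∀ i, 1 ≤ x i ∧ x i < n}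

/-- The generalized signed sumset `S̄_d(m;a;n)`:
residues `x_1 + ⋯ + x_m - x_{m+1} - ⋯ - x_d mod n` for `(x_1,…,x_d) ∈ H_d(a;n)`. -/
def signedSumset (d m : ℕ) (a : ℤ) (n : ℕ) : Set (ZMod n) :=
  {s | ∃ x ∈ modularHyperbola d a n,
    s = ((∑ i : Fin d, (if (i : ℕ) < m then x i else -x i) : ℤ) : ZMod n)}

/-- Residue-level description of the signed sumset. -/
def Sp (d m : ℕ) (a : ℤ) (n : ℕ) : Set (ZMod n) :=
  {s | ∃ y : Fin d → ZMod n, (∏ i, y i) = (a : ZMod n) ∧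
    s = ∑ i : Fin d, (if (i : ℕ) < m then y i else - y i)}

lemma signedSumset_eq_Sp (d m : ℕ) (a : ℤ) (n : ℕ) (hn : 2 ≤ n)
    (ha : IsCoprime a (n : ℤ)) : signedSumset d m a n = Sp d m a n := by
  haveI : NeZero n := ⟨by omega⟩
  haveI : Fact (1 < n) := ⟨hn⟩
  ext s
  constructor
  · rintro ⟨x, ⟨hx, hxr⟩, rfl⟩
    refine ⟨fun i => ((x i : ℤ) : ZMod n), ?_, ?_⟩
    · rw [← (ZMod.intCast_eq_intCast_iff _ _ _).mpr hx]
      push_cast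
      rfl
    · rw [Int.cast_sum]
      refine Finset.sum_congr rfl fun i _ => ?_
      split <;> push_cast <;> rfl
  · rintro ⟨y, hy, rfl⟩
    have haunit : IsUnit ((a : ZMod n)) := by
      obtain ⟨u, v, huv⟩ := ha
      refine IsUnit.of_mul_eq_one ((u : ZMod n)) ?_
      have h1 : ((u * a + v * n : ℤ) : ZMod n) = 1 := by rw [huv]; exact Int.cast_one
      push_cast at h1
      rw [ZMod.natCast_self, mul_zero, add_zero] at h1
      rw [mul_comm]; exact h1
    have hyu : ∀ i, IsUnit (y i) := fun i =>
      isUnit_of_dvd_unit (Finset.dvd_prod_of_mem y (Finset.mem_univ i)) (hy ▸ haunit)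
    have hy0 : ∀ i, y i ≠ 0 := by
      intro i h
      have := hyu i
      rw [h, isUnit_zero_iff] at this
      exact zero_ne_one this
    have hkey : ∀ i, (((y i).val : ℤ) : ZMod n) = y i := by
      intro i
      push_cast
      rw [ZMod.natCast_val, ZMod.cast_id]
    refine ⟨fun i => ((y i).val : ℤ), ⟨?_, ?_⟩, ?_⟩
    · rw [← ZMod.intCast_eq_intCast_iff]
      rw [← hy, Int.cast_prod]
      exact Finset.prod_congr rfl fun i _ => hkey i
    · intro i
      constructor
      · show (1 : ℤ) ≤ ((y i).val : ℤ)
        have : (y i).val ≠ 0 := fun h => hy0 i ((ZMod.val_eq_zero _).mp h)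
        omega
      · show (((y i).val : ℤ)) < (n : ℤ)
        exact_mod_cast (ZMod.val_lt (y i))
    · rw [Int.cast_sum]
      refine (Finset.sum_congr rfl fun i _ => ?_).symm
      split
      · exact hkey i
      · push_cast
        rw [ZMod.natCast_val, ZMod.cast_id]

theorem stmt0 (d m : ℕ) (hd : 2 ≤ d) (hm : m ≤ d) (a : ℤ) (n : ℕ) (hn : 2 ≤ n)
    (ha : IsCoprime a (n : ℤ)) :
    (signedSumset d m a n).ncard =
      ∏ p ∈ n.factorization.support,
        (signedSumset d m a (p ^ n.factorization p)).ncard := by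
  classical
  haveI : NeZero n := ⟨by omega⟩
  have hn0 : n ≠ 0 := by omega
  have hpp : ∀ p : ℕ, p ∈ n.factorization.support → p.Prime := fun p hp =>
    Nat.prime_of_mem_primeFactors (by rwa [← Nat.support_factorization])
  have hf2' : ∀ p ∈ n.factorization.support, 2 ≤ p ^ n.factorization p := by
    intro p hp
    exact Nat.one_lt_pow (Finsupp.mem_support_iff.mp hp) (hpp p hp).one_lt
  have hfa' : ∀ p ∈ n.factorization.support,
      IsCoprime a ((p ^ n.factorization p : ℕ) : ℤ) := by
    intro p hp
    exact ha.of_isCoprime_of_dvd_right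
      (Int.natCast_dvd_natCast.mpr (Nat.ordProj_dvd n p))
  haveI : ∀ i : {p : ℕ // p ∈ n.factorization.support},
      NeZero ((i : ℕ) ^ n.factorization (i : ℕ)) := fun i =>
    ⟨by have := hf2' _ i.2; omega⟩
  have hprod : (∏ i : {p : ℕ // p ∈ n.factorization.support},
      (i : ℕ) ^ n.factorization (i : ℕ)) = n := by
    rw [Finset.prod_coe_sort n.factorization.support (fun p => p ^ n.factorization p)]
    exact Nat.factorization_prod_pow_eq_self hn0
  have hcop : Pairwise (Function.onFun Nat.Coprime
      (fun i : {p : ℕ // p ∈ n.factorization.support} =>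
        (i : ℕ) ^ n.factorization (i : ℕ))) := by
    intro i j hij
    exact Nat.Coprime.pow _ _
      ((Nat.coprime_primes (hpp _ i.2) (hpp _ j.2)).mpr (Subtype.coe_injective.ne hij))
  let e : ZMod n ≃+* Π i : {p : ℕ // p ∈ n.factorization.support},
      ZMod ((i : ℕ) ^ n.factorization (i : ℕ)) :=
    (ZMod.ringEquivCongr hprod.symm).trans (ZMod.prodEquivPi _ hcop)
  have hkey : (e '' Sp d m a n) = Set.pi Set.univ
      (fun i : {p : ℕ // p ∈ n.factorization.support} =>
        Sp d m a ((i : ℕ) ^ n.factorization (i : ℕ))) := by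
    ext t
    constructor
    · rintro ⟨s, ⟨y, hy, rfl⟩, rfl⟩
      intro i _
      let g : ZMod n →+* ZMod ((i : ℕ) ^ n.factorization (i : ℕ)) :=
        (Pi.evalRingHom (fun j : {p : ℕ // p ∈ n.factorization.support} =>
          ZMod ((j : ℕ) ^ n.factorization (j : ℕ))) i).comp (e : ZMod n →+* _)
      have hg : ∀ x : ZMod n, g x = e x i := fun _ => rfl
      refine ⟨fun j => g (y j), ?_, ?_⟩
      · rw [← map_prod, hy, map_intCast]
      · rw [← hg, map_sum]
        refine Finset.sum_congr rfl fun j _ => ?_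
        split <;> simp [map_neg]
    · intro ht
      choose y hy1 hy2 using fun i => ht i (Set.mem_univ i)
      refine ⟨e.symm t, ⟨fun j => e.symm (fun i => y i j), ?_, ?_⟩, e.apply_symm_apply t⟩
      · apply e.injective
        rw [map_prod, map_intCast]
        funext i
        rw [Finset.prod_apply]
        simp only [RingEquiv.apply_symm_apply]
        exact hy1 i
      · apply e.injective
        rw [e.apply_symm_apply, map_sum]
        funext i
        rw [Finset.sum_apply, hy2 i]
        refine Finset.sum_congr rfl fun j _ => ?_
        have h := congrFun (e.apply_symm_apply (fun i => y i j)) i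
        split <;> simp only [map_neg, Pi.neg_apply, h]
  have hstep : (Sp d m a n).ncard =
      ∏ i : {p : ℕ // p ∈ n.factorization.support},
        (Sp d m a ((i : ℕ) ^ n.factorization (i : ℕ))).ncard := by
    rw [← Set.ncard_image_of_injective _ e.injective, hkey,
      ← Nat.card_coe_set_eq, Nat.card_congr (Equiv.Set.univPi _), Nat.card_pi]
    simp only [Nat.card_coe_set_eq]
  rw [signedSumset_eq_Sp d m a n hn ha, hstep,
    Finset.prod_coe_sort n.factorization.support
      (fun p => (Sp d m a (p ^ n.factorization p)).ncard)]
  exact Finset.prod_congr rfl fun p hp =>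
    (congrArg Set.ncard (signedSumset_eq_Sp d m a _ (hf2' p hp) (hfa' p hp))).symm
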